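/- (Gowers–Cauchy–Schwarz inequality for ℓ-box norms.) Let V be a nonempty finite set, let s ≥ 2 be an integer, let ℓ ≥ 2 be an even integer, and for every ω ∈ [ℓ]^s let F_ω : V^s → ℝ. Then |𝔼[∏_{ω∈[ℓ]^s} F_ω(π_ω(x)) | x ∈ V^{s×ℓ}]| ≤ ∏_{ω∈[ℓ]^s} ‖F_ω‖_{□_ℓ(V^s)}. -/
import Mathlib


open Finset

/-- The average of a real-valued function on a finite type. -/
noncomputable def avg (α : Type*) [Fintype α] (f : α → ℝ) : ℝ :=
  (∑ x, f x) / (Fintype.card α : ℝ)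

/-- The `ℓ`-box norm `‖F‖_{□_ℓ(V^s)}` of `F : V^s → ℝ`.  Here `V^{s×ℓ}` is modelled as
`Fin s → Fin ℓ → V`, an element `ω ∈ [ℓ]^s` as `ω : Fin s → Fin ℓ`, and the projection
`π_ω : V^{s×ℓ} → V^s` sends `x` to `fun i => x i (ω i)`.  The box norm `‖F‖_{□(V^s)}`
is the case `ℓ = 2`. -/
noncomputable def boxNorm (V : Type*) [Fintype V] (s ℓ : ℕ) (F : (Fin s → V) → ℝ) : ℝ :=
  (avg (Fin s → Fin ℓ → V) fun x =>
      ∏ ω : Fin s → Fin ℓ, F fun i => x i (ω i)) ^ (((ℓ : ℝ) ^ s)⁻¹)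

/-- The cut norm `‖F‖_{cut(V^s)}` of `F : V^s → ℝ`; the distinguished element `1^s` of
`[2]^s` is modelled as `fun _ => (0 : Fin 2)`. -/
noncomputable def cutNorm (V : Type*) [Fintype V] (s : ℕ) (F : (Fin s → V) → ℝ) : ℝ :=
  sSup {r : ℝ | ∃ H : (Fin s → Fin 2) → (Fin s → V) → ℝ,
    (∀ ω y, H ω y ∈ Set.Icc (-1 : ℝ) 1) ∧
    r = avg (Fin s → Fin 2 → V) fun x =>
      F (fun i => x i 0) *
        ∏ ω ∈ Finset.univ.filter (fun ω : Fin s → Fin 2 => ω ≠ fun _ => 0),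
          H ω fun i => x i (ω i)}
namespace GCS

lemma avg_nonneg' {α : Type*} [Fintype α] {f : α → ℝ} (h : ∀ a, 0 ≤ f a) : 0 ≤ avg α f :=
  div_nonneg (Finset.sum_nonneg fun a _ => h a) (Nat.cast_nonneg _)

lemma abs_avg_le {α : Type*} [Fintype α] (f : α → ℝ) : |avg α f| ≤ avg α fun a => |f a| := by
  rw [avg, avg, abs_div, abs_of_nonneg (Nat.cast_nonneg _ : (0:ℝ) ≤ _)]
  gcongr
  exact Finset.abs_sum_le_sum_abs _ _

lemma avg_congr {α : Type*} [Fintype α] {f g : α → ℝ} (h : ∀ a, f a = g a) : avg α f = avg α g := by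
  rw [avg, avg]; congr 1; exact Finset.sum_congr rfl fun a _ => h a

lemma avg_equiv {α β : Type*} [Fintype α] [Fintype β] (e : α ≃ β) (f : β → ℝ) :
    avg α (fun a => f (e a)) = avg β f := by
  rw [avg, avg, Equiv.sum_comp e f, Fintype.card_congr e]

lemma avg_prod' {α β : Type*} [Fintype α] [Fintype β] (f : α × β → ℝ) :
    avg (α × β) f = avg β fun b => avg α fun a => f (a, b) := by
  simp only [avg, Fintype.card_prod]
  rw [Fintype.sum_prod_type, Finset.sum_comm, ← Finset.sum_div, div_div]
  push_cast
  rw [mul_comm]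

lemma avg_pi_prod {ι W : Type*} [Fintype ι] [DecidableEq ι] [Fintype W] (g : ι → W → ℝ) :
    avg (ι → W) (fun u => ∏ k, g k (u k)) = ∏ k, avg W (g k) := by
  have h : ∏ k, avg W (g k) = (∏ k, ∑ v, g k v) / (Fintype.card W : ℝ) ^ Fintype.card ι := by
    simp only [avg]
    rw [Finset.prod_div_distrib, Finset.prod_const, Finset.card_univ]
  rw [h, avg, Fintype.prod_sum, Fintype.card_fun]
  push_cast
  rfl

variable {s ℓ : ℕ}

lemma esp_symm_apply {X : Type*} (j : Fin s) (v : X) (z : {i : Fin s // i ≠ j} → X) (i : Fin s) :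
    (Equiv.funSplitAt j X).symm (v, z) i = if h : i = j then v else z ⟨i, h⟩ := by
  rcases eq_or_ne i j with h | h
  · subst h; simp [Equiv.funSplitAt, Equiv.piSplitAt]
  · simp [Equiv.funSplitAt, Equiv.piSplitAt, h]

lemma symm_update (j : Fin s) (k k' : Fin ℓ) (τ : {i : Fin s // i ≠ j} → Fin ℓ) :
    Function.update ((Equiv.funSplitAt j (Fin ℓ)).symm (k, τ)) j k'
      = (Equiv.funSplitAt j (Fin ℓ)).symm (k', τ) := by
  funext i
  rcases eq_or_ne i j with h | h
  · subst h; simp [esp_symm_apply]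
  · simp [Function.update_of_ne h, esp_symm_apply, h]

lemma prod_pair {M : Type*} [CommMonoid M] (j : Fin s) (φ : (Fin s → Fin ℓ) → M) :
    ∏ κ : Fin s → Fin ℓ, φ κ
      = ∏ p : Fin ℓ × ({i : Fin s // i ≠ j} → Fin ℓ), φ ((Equiv.funSplitAt j (Fin ℓ)).symm p) :=
  (Equiv.prod_comp (Equiv.funSplitAt j (Fin ℓ)).symm φ).symm

lemma prod_prod_update (j : Fin s) (φ : (Fin s → Fin ℓ) → ℝ) :
    ∏ κ : Fin s → Fin ℓ, ∏ k : Fin ℓ, φ (Function.update κ j k) = (∏ κ, φ κ) ^ ℓ := by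
  rw [prod_pair j (fun κ => ∏ k : Fin ℓ, φ (Function.update κ j k)), Fintype.prod_prod_type]
  simp only [symm_update]
  calc ∏ a : Fin ℓ, ∏ τ : {i : Fin s // i ≠ j} → Fin ℓ, ∏ k : Fin ℓ,
        φ ((Equiv.funSplitAt j (Fin ℓ)).symm (k, τ))
      = ∏ _a : Fin ℓ, ∏ κ : Fin s → Fin ℓ, φ κ := by
        refine Finset.prod_congr rfl fun a _ => ?_
        rw [Finset.prod_comm, ← Fintype.prod_prod_type
          (f := fun p : Fin ℓ × ({i : Fin s // i ≠ j} → Fin ℓ) =>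
            φ ((Equiv.funSplitAt j (Fin ℓ)).symm p)), ← prod_pair j φ]
    _ = (∏ κ, φ κ) ^ ℓ := by
        rw [Finset.prod_const, Finset.card_univ, Fintype.card_fin]

lemma card_eq (j : Fin s) :
    ℓ ^ s = ℓ * Fintype.card ({i : Fin s // i ≠ j} → Fin ℓ) := by
  have h := Fintype.card_congr (Equiv.funSplitAt j (Fin ℓ))
  rw [Fintype.card_fun, Fintype.card_prod, Fintype.card_fin, Fintype.card_fin] at h
  exact h

lemma holder_sum {Y : Type*} [Fintype Y] (hℓ2 : 2 ≤ ℓ) (A : Fin ℓ → Y → ℝ)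
    (hA : ∀ k y, 0 ≤ A k y) :
    ∑ y, ∏ k, A k y ≤ ∏ k, (∑ y, A k y ^ ℓ) ^ ((ℓ : ℝ)⁻¹) := by
  have hl0 : (ℓ : ℝ) ≠ 0 := by positivity
  set T : Fin ℓ → ℝ := fun k => ∑ y, A k y ^ ℓ with hTdef
  have hT0 : ∀ k, 0 ≤ T k := fun k => Finset.sum_nonneg fun y _ => pow_nonneg (hA k y) ℓ
  by_cases hz : ∃ k, T k = 0
  · obtain ⟨k0, hk0⟩ := hz
    have hA0 : ∀ y, A k0 y = 0 := by
      intro y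
      have h := (Finset.sum_eq_zero_iff_of_nonneg
        (fun y _ => pow_nonneg (hA k0 y) ℓ)).1 hk0 y (mem_univ y)
      exact pow_eq_zero_iff (by omega) |>.1 h
    have l0 : ∑ y, ∏ k, A k y = 0 :=
      Finset.sum_eq_zero fun y _ => Finset.prod_eq_zero (mem_univ k0) (hA0 y)
    rw [l0]
    exact Finset.prod_nonneg fun k _ => Real.rpow_nonneg (hT0 k) _
  · push_neg at hz
    have hTpos : ∀ k, 0 < T k := fun k => (hT0 k).lt_of_ne' (hz k)
    have hw : ∑ _k : Fin ℓ, (ℓ : ℝ)⁻¹ = 1 := by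
      rw [Finset.sum_const, Finset.card_univ, Fintype.card_fin, nsmul_eq_mul,
        mul_inv_cancel₀ hl0]
    have key : ∀ y, ∏ k, A k y
        ≤ (∏ k, T k ^ ((ℓ : ℝ)⁻¹)) * ∑ k, (ℓ : ℝ)⁻¹ * (A k y ^ ℓ / T k) := by
      intro y
      have amgm := Real.geom_mean_le_arith_mean_weighted Finset.univ (fun _ => (ℓ : ℝ)⁻¹)
        (fun k => A k y ^ ℓ / T k) (fun _ _ => inv_nonneg.2 (Nat.cast_nonneg ℓ)) hw
        (fun k _ => div_nonneg (pow_nonneg (hA k y) ℓ) (hT0 k))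
      have lhs_eq : ∀ k, (A k y ^ ℓ / T k) ^ ((ℓ : ℝ)⁻¹)
          = A k y / T k ^ ((ℓ : ℝ)⁻¹) := by
        intro k
        rw [Real.div_rpow (pow_nonneg (hA k y) ℓ) (hT0 k)]
        congr 1
        rw [← Real.rpow_natCast (A k y) ℓ, ← Real.rpow_mul (hA k y),
          mul_inv_cancel₀ hl0, Real.rpow_one]
      rw [Finset.prod_congr rfl fun k _ => lhs_eq k, Finset.prod_div_distrib] at amgm
      rw [← div_le_iff₀' (Finset.prod_pos fun k _ => Real.rpow_pos_of_pos (hTpos k) _)]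
      exact amgm
    calc ∑ y, ∏ k, A k y
        ≤ ∑ y, (∏ k, T k ^ ((ℓ : ℝ)⁻¹)) * ∑ k, (ℓ : ℝ)⁻¹ * (A k y ^ ℓ / T k) :=
          Finset.sum_le_sum fun y _ => key y
      _ = (∏ k, T k ^ ((ℓ : ℝ)⁻¹)) * ∑ k, (ℓ : ℝ)⁻¹ * (T k / T k) := by
          rw [← Finset.mul_sum]
          congr 1
          rw [Finset.sum_comm]
          refine Finset.sum_congr rfl fun k _ => ?_
          rw [← Finset.mul_sum, ← Finset.sum_div]
      _ = ∏ k, T k ^ ((ℓ : ℝ)⁻¹) := by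
          have h1 : ∀ k, T k / T k = 1 := fun k => div_self (hz k)
          simp only [h1, mul_one, hw, mul_one]

lemma holder_avg {Y : Type*} [Fintype Y] [Nonempty Y] (hℓ2 : 2 ≤ ℓ) (A : Fin ℓ → Y → ℝ)
    (hA : ∀ k y, 0 ≤ A k y) :
    avg Y (fun y => ∏ k, A k y) ≤ ∏ k, (avg Y fun y => A k y ^ ℓ) ^ ((ℓ : ℝ)⁻¹) := by
  have hl0 : (ℓ : ℝ) ≠ 0 := by positivity
  have hN : (0 : ℝ) < (Fintype.card Y : ℝ) := by exact_mod_cast Fintype.card_pos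
  have hrhs : ∏ k, (avg Y fun y => A k y ^ ℓ) ^ ((ℓ : ℝ)⁻¹)
      = (∏ k, (∑ y, A k y ^ ℓ) ^ ((ℓ : ℝ)⁻¹)) / (Fintype.card Y : ℝ) := by
    have h1 : ∀ k : Fin ℓ, (avg Y fun y => A k y ^ ℓ) ^ ((ℓ : ℝ)⁻¹)
        = (∑ y, A k y ^ ℓ) ^ ((ℓ : ℝ)⁻¹) / (Fintype.card Y : ℝ) ^ ((ℓ : ℝ)⁻¹) := by
      intro k
      rw [avg, Real.div_rpow (Finset.sum_nonneg fun y _ => pow_nonneg (hA k y) ℓ) hN.le]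
    rw [Finset.prod_congr rfl fun k _ => h1 k, Finset.prod_div_distrib]
    congr 1
    rw [Finset.prod_const, Finset.card_univ, Fintype.card_fin,
      ← Real.rpow_natCast ((Fintype.card Y : ℝ) ^ ((ℓ : ℝ)⁻¹)) ℓ,
      ← Real.rpow_mul hN.le, inv_mul_cancel₀ hl0, Real.rpow_one]
  rw [hrhs, avg]
  gcongr
  exact holder_sum hℓ2 A hA

variable {V : Type} [Fintype V] [Nonempty V]

/-- The basic multilinear average. -/
noncomputable def B (G : (Fin s → Fin ℓ) → (Fin s → V) → ℝ) : ℝ :=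
  avg (Fin s → Fin ℓ → V) fun x => ∏ ω : Fin s → Fin ℓ, G ω fun i => x i (ω i)

/-- The slice function appearing when splitting the average at coordinate `j`. -/
noncomputable def sg (G : (Fin s → Fin ℓ) → (Fin s → V) → ℝ) (j : Fin s)
    (y : {i : Fin s // i ≠ j} → Fin ℓ → V) (k : Fin ℓ) (v : V) : ℝ :=
  ∏ τ : {i : Fin s // i ≠ j} → Fin ℓ,
    G ((Equiv.funSplitAt j (Fin ℓ)).symm (k, τ))
      ((Equiv.funSplitAt j V).symm (v, fun d => y d (τ d)))

lemma B_split (G : (Fin s → Fin ℓ) → (Fin s → V) → ℝ) (j : Fin s) :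
    B G = avg ({i : Fin s // i ≠ j} → Fin ℓ → V) fun y => ∏ k, avg V (sg G j y k) := by
  rw [B, ← avg_equiv ((Equiv.funSplitAt j (Fin ℓ → V)).symm)
      (fun x => ∏ ω : Fin s → Fin ℓ, G ω fun i => x i (ω i)), avg_prod']
  refine avg_congr fun y => ?_
  rw [← avg_pi_prod (fun k => sg G j y k)]
  refine avg_congr fun u => ?_
  rw [← Equiv.prod_comp ((Equiv.funSplitAt j (Fin ℓ)).symm)
      (fun ω => G ω fun i => (Equiv.funSplitAt j (Fin ℓ → V)).symm (u, y) i (ω i)),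
    Fintype.prod_prod_type]
  refine Finset.prod_congr rfl fun k _ => Finset.prod_congr rfl fun τ _ => ?_
  congr 1
  funext i
  rcases eq_or_ne i j with h | h
  · subst h; simp [esp_symm_apply]
  · simp [esp_symm_apply, h]

lemma B_update (G : (Fin s → Fin ℓ) → (Fin s → V) → ℝ) (j : Fin s) (k0 : Fin ℓ) :
    B (fun ω => G (Function.update ω j k0))
      = avg ({i : Fin s // i ≠ j} → Fin ℓ → V) fun y => (avg V (sg G j y k0)) ^ ℓ := by
  rw [B_split (fun ω => G (Function.update ω j k0)) j]
  refine avg_congr fun y => ?_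
  have h : ∀ k, sg (fun ω => G (Function.update ω j k0)) j y k = sg G j y k0 := by
    intro k; funext v; unfold sg
    refine Finset.prod_congr rfl fun τ _ => ?_
    simp only [symm_update]
  calc (∏ k : Fin ℓ, avg V (sg (fun ω => G (Function.update ω j k0)) j y k))
      = ∏ _k : Fin ℓ, avg V (sg G j y k0) := by
        refine Finset.prod_congr rfl fun k _ => by rw [h k]
    _ = (avg V (sg G j y k0)) ^ ℓ := by
        rw [Finset.prod_const, Finset.card_univ, Fintype.card_fin]

lemma B_update_nonneg (hℓ : Even ℓ) (G : (Fin s → Fin ℓ) → (Fin s → V) → ℝ) (j : Fin s)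
    (k0 : Fin ℓ) : 0 ≤ B (fun ω => G (Function.update ω j k0)) := by
  rw [B_update]
  exact avg_nonneg' fun y => hℓ.pow_nonneg _

lemma B_nonneg_of_indep (hℓ2 : 2 ≤ ℓ) (hℓ : Even ℓ) (G : (Fin s → Fin ℓ) → (Fin s → V) → ℝ)
    (j : Fin s) (hG : ∀ ω k, G (Function.update ω j k) = G ω) : 0 ≤ B G := by
  have k0 : Fin ℓ := ⟨0, by omega⟩
  have h : (fun ω => G (Function.update ω j k0)) = G := by
    funext ω; exact hG ω k0
  rw [← h]
  exact B_update_nonneg hℓ G j k0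

/-- One-step Gowers–Cauchy–Schwarz at coordinate `j`. -/
lemma step (hℓ2 : 2 ≤ ℓ) (hℓ : Even ℓ) (G : (Fin s → Fin ℓ) → (Fin s → V) → ℝ) (j : Fin s) :
    |B G| ≤ ∏ k : Fin ℓ, (B fun ω => G (Function.update ω j k)) ^ ((ℓ : ℝ)⁻¹) := by
  rw [B_split G j]
  calc |avg ({i : Fin s // i ≠ j} → Fin ℓ → V) fun y => ∏ k, avg V (sg G j y k)|
      ≤ avg ({i : Fin s // i ≠ j} → Fin ℓ → V) fun y => |∏ k, avg V (sg G j y k)| :=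
        abs_avg_le _
    _ = avg ({i : Fin s // i ≠ j} → Fin ℓ → V) fun y => ∏ k, |avg V (sg G j y k)| :=
        avg_congr fun y => Finset.abs_prod _ _
    _ ≤ ∏ k, (avg ({i : Fin s // i ≠ j} → Fin ℓ → V) fun y => |avg V (sg G j y k)| ^ ℓ)
          ^ ((ℓ : ℝ)⁻¹) :=
        holder_avg hℓ2 (fun k y => |avg V (sg G j y k)|) (fun k y => abs_nonneg _)
    _ = ∏ k : Fin ℓ, (B fun ω => G (Function.update ω j k)) ^ ((ℓ : ℝ)⁻¹) := by
        refine Finset.prod_congr rfl fun k _ => ?_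
        congr 1
        rw [B_update]
        exact avg_congr fun y => hℓ.pow_abs _

/-- Merging `κ` into `ω` on the coordinates in `T`. -/
def mg (T : Finset (Fin s)) (κ ω : Fin s → Fin ℓ) : Fin s → Fin ℓ := fun i =>
  if i ∈ T then κ i else ω i

lemma mg_update_mem {T : Finset (Fin s)} {j0 : Fin s} (h : j0 ∈ T) (κ ω : Fin s → Fin ℓ)
    (k : Fin ℓ) : mg T κ (Function.update ω j0 k) = mg T κ ω := by
  funext i
  by_cases hi : i ∈ T
  · simp [mg, hi]
  · have : i ≠ j0 := fun he => hi (he ▸ h)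
    simp [mg, hi, Function.update_of_ne this]

lemma mg_cons {T : Finset (Fin s)} {j : Fin s} (hj : j ∉ T) (κ ω : Fin s → Fin ℓ) (k : Fin ℓ) :
    mg T κ (Function.update ω j k) = mg (Finset.cons j T hj) (Function.update κ j k) ω := by
  funext i
  rcases eq_or_ne i j with h | h
  · subst h; simp [mg, hj]
  · by_cases hi : i ∈ T
    · simp [mg, hi, Finset.mem_cons, h, Function.update_of_ne h]
    · have : i ∉ Finset.cons j T hj := by simp [Finset.mem_cons, h, hi]
      simp [mg, hi, this, Function.update_of_ne h, h]

lemma mg_singleton (j : Fin s) (κ ω : Fin s → Fin ℓ) :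
    mg {j} κ ω = Function.update ω j (κ j) := by
  funext i
  rcases eq_or_ne i j with h | h
  · subst h; simp [mg]
  · simp [mg, h, Function.update_of_ne h]

lemma B_mg_nonneg (hℓ2 : 2 ≤ ℓ) (hℓ : Even ℓ) (G : (Fin s → Fin ℓ) → (Fin s → V) → ℝ)
    {T : Finset (Fin s)} (hT : T.Nonempty) (κ : Fin s → Fin ℓ) :
    0 ≤ B (fun ω => G (mg T κ ω)) := by
  obtain ⟨j0, hj0⟩ := hT
  refine B_nonneg_of_indep hℓ2 hℓ _ j0 fun ω k => ?_
  simp only [mg_update_mem hj0]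

lemma main (hℓ2 : 2 ≤ ℓ) (hℓ : Even ℓ) (G : (Fin s → Fin ℓ) → (Fin s → V) → ℝ)
    {T : Finset (Fin s)} (hT : T.Nonempty) :
    |B G| ≤ ∏ κ : Fin s → Fin ℓ, (B fun ω => G (mg T κ ω)) ^ (((ℓ : ℝ) ^ s)⁻¹) := by
  have hl0 : (ℓ : ℝ) ≠ 0 := by positivity
  induction hT using Finset.Nonempty.cons_induction with
  | singleton j =>
    refine (step hℓ2 hℓ G j).trans (le_of_eq ?_)
    rw [prod_pair j (fun κ => (B fun ω => G (mg {j} κ ω)) ^ (((ℓ : ℝ) ^ s)⁻¹)),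
      Fintype.prod_prod_type]
    have hmg : ∀ (a : Fin ℓ) (τ : {i : Fin s // i ≠ j} → Fin ℓ),
        (fun ω => G (mg {j} ((Equiv.funSplitAt j (Fin ℓ)).symm (a, τ)) ω))
          = fun ω => G (Function.update ω j a) := by
      intro a τ
      funext ω
      rw [mg_singleton]
      congr 2
      rw [esp_symm_apply]
      simp
    refine Finset.prod_congr rfl fun a _ => ?_
    have hN0 : (Fintype.card ({i : Fin s // i ≠ j} → Fin ℓ) : ℝ) ≠ 0 := by
      have hne : Nonempty ({i : Fin s // i ≠ j} → Fin ℓ) := ⟨fun _ => ⟨0, by omega⟩⟩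
      have : 0 < Fintype.card ({i : Fin s // i ≠ j} → Fin ℓ) := Fintype.card_pos
      exact_mod_cast this.ne'
    calc (B fun ω => G (Function.update ω j a)) ^ ((ℓ : ℝ)⁻¹)
        = ((B fun ω => G (Function.update ω j a)) ^ (((ℓ : ℝ) ^ s)⁻¹))
            ^ (Fintype.card ({i : Fin s // i ≠ j} → Fin ℓ) : ℕ) := by
          rw [← Real.rpow_natCast
            ((B fun ω => G (Function.update ω j a)) ^ (((ℓ : ℝ) ^ s)⁻¹)) _,
            ← Real.rpow_mul (B_update_nonneg hℓ G j a)]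
          congr 1
          have hc := card_eq (ℓ := ℓ) j
          have hc' : (ℓ : ℝ) ^ s
              = (ℓ : ℝ) * (Fintype.card ({i : Fin s // i ≠ j} → Fin ℓ) : ℝ) := by
            exact_mod_cast congrArg (Nat.cast : ℕ → ℝ) hc
          rw [hc', mul_inv, mul_assoc, inv_mul_cancel₀ hN0, mul_one]
      _ = ∏ _τ : {i : Fin s // i ≠ j} → Fin ℓ,
            (B fun ω => G (Function.update ω j a)) ^ (((ℓ : ℝ) ^ s)⁻¹) := by
          rw [Finset.prod_const, Finset.card_univ]
      _ = ∏ τ : {i : Fin s // i ≠ j} → Fin ℓ,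
            (B fun ω => G (mg {j} ((Equiv.funSplitAt j (Fin ℓ)).symm (a, τ)) ω))
              ^ (((ℓ : ℝ) ^ s)⁻¹) := by
          refine Finset.prod_congr rfl fun τ _ => ?_
          rw [hmg a τ]
  | cons j T hj hT ih =>
    have hq0 : (0 : ℝ) ≤ ((ℓ : ℝ) ^ s)⁻¹ := by positivity
    have hTc : (Finset.cons j T hj).Nonempty := Finset.cons_nonempty hj
    calc |B G| ≤ ∏ κ : Fin s → Fin ℓ, (B fun ω => G (mg T κ ω)) ^ (((ℓ : ℝ) ^ s)⁻¹) := ih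
      _ ≤ ∏ κ : Fin s → Fin ℓ, ∏ k : Fin ℓ,
            (B fun ω => G (mg (Finset.cons j T hj) (Function.update κ j k) ω))
              ^ ((ℓ : ℝ)⁻¹ * ((ℓ : ℝ) ^ s)⁻¹) := by
          refine Finset.prod_le_prod (fun κ _ => Real.rpow_nonneg
            (B_mg_nonneg hℓ2 hℓ G hT κ) _) fun κ _ => ?_
          have h1 : B (fun ω => G (mg T κ ω)) = |B (fun ω => G (mg T κ ω))| :=
            (abs_of_nonneg (B_mg_nonneg hℓ2 hℓ G hT κ)).symm
          have h2 := step hℓ2 hℓ (fun ω => G (mg T κ ω)) j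
          have h3 : ∀ k : Fin ℓ, (fun ω => G (mg T κ (Function.update ω j k)))
              = fun ω => G (mg (Finset.cons j T hj) (Function.update κ j k) ω) := by
            intro k; funext ω; rw [mg_cons hj]
          rw [Finset.prod_congr rfl (fun k _ => by rw [h3 k])] at h2
          calc (B fun ω => G (mg T κ ω)) ^ (((ℓ : ℝ) ^ s)⁻¹)
              ≤ (∏ k : Fin ℓ,
                  (B fun ω => G (mg (Finset.cons j T hj) (Function.update κ j k) ω))
                    ^ ((ℓ : ℝ)⁻¹)) ^ (((ℓ : ℝ) ^ s)⁻¹) := by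
                rw [h1]
                exact Real.rpow_le_rpow (abs_nonneg _) h2 hq0
            _ = ∏ k : Fin ℓ,
                  (B fun ω => G (mg (Finset.cons j T hj) (Function.update κ j k) ω))
                    ^ ((ℓ : ℝ)⁻¹ * ((ℓ : ℝ) ^ s)⁻¹) := by
                rw [← Real.finset_prod_rpow _ _
                  (fun k _ => Real.rpow_nonneg (B_mg_nonneg hℓ2 hℓ G hTc _) _) _]
                refine Finset.prod_congr rfl fun k _ => ?_
                rw [← Real.rpow_mul (B_mg_nonneg hℓ2 hℓ G hTc _)]
      _ = ∏ κ : Fin s → Fin ℓ,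
            (B fun ω => G (mg (Finset.cons j T hj) κ ω)) ^ (((ℓ : ℝ) ^ s)⁻¹) := by
          rw [prod_prod_update j (fun κ' =>
            (B fun ω => G (mg (Finset.cons j T hj) κ' ω)) ^ ((ℓ : ℝ)⁻¹ * ((ℓ : ℝ) ^ s)⁻¹)),
            ← Finset.prod_pow]
          refine Finset.prod_congr rfl fun κ _ => ?_
          rw [← Real.rpow_natCast
            ((B fun ω => G (mg (Finset.cons j T hj) κ ω))
              ^ ((ℓ : ℝ)⁻¹ * ((ℓ : ℝ) ^ s)⁻¹)) ℓ,
            ← Real.rpow_mul (B_mg_nonneg hℓ2 hℓ G hTc κ)]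
          congr 1
          field_simp

end GCS

/-- The Gowers–Cauchy–Schwarz inequality for `ℓ`-box norms. -/
theorem stmt14 (V : Type) [Fintype V] [Nonempty V] (s : ℕ) (hs : 2 ≤ s)
    (ℓ : ℕ) (hℓ2 : 2 ≤ ℓ) (hℓ : Even ℓ)
    (F : (Fin s → Fin ℓ) → (Fin s → V) → ℝ) :
    |avg (Fin s → Fin ℓ → V) fun x => ∏ ω : Fin s → Fin ℓ, F ω fun i => x i (ω i)|
      ≤ ∏ ω : Fin s → Fin ℓ, boxNorm V s ℓ (F ω) := by
  have h := GCS.main hℓ2 hℓ F (T := Finset.univ) ⟨⟨0, by omega⟩, Finset.mem_univ _⟩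
  have hmg : ∀ κ : Fin s → Fin ℓ, (fun ω => F (GCS.mg Finset.univ κ ω)) = fun _ => F κ := by
    intro κ; funext ω
    have hmg1 : GCS.mg Finset.univ κ ω = κ := by
      funext i
      show (if i ∈ Finset.univ then κ i else ω i) = κ i
      simp
    rw [hmg1]
  rw [Finset.prod_congr rfl (fun κ _ => by rw [hmg κ])] at h
  exact h
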